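/- A Borel subset B of the Baire space ω^ω belongs to the tree ideal m₀ if and only if B does not contain the body [T] of any Miller tree T. -/

import Mathlib

open Cardinal Set MeasureTheory

/-- A tree on ω: a nonempty set of finite sequences closed under initial segments. -/
def IsTree (T : Set (List ℕ)) : Prop :=
  T.Nonempty ∧ ∀ s ∈ T, ∀ n : ℕ, s.take n ∈ T

/-- The body of a tree: all infinite branches. -/
def treeBody (T : Set (List ℕ)) : Set (ℕ → ℕ) :=
  {x | ∀ n : ℕ, (List.ofFn fun i : Fin n => x i) ∈ T}

/-- Immediate successors of a node in a tree. -/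
def succs (T : Set (List ℕ)) (t : List ℕ) : Set ℕ := {n | t ++ [n] ∈ T}

/-- Sacks (perfect) tree: every node has an extension with at least two immediate successors. -/
def IsSacksTree (T : Set (List ℕ)) : Prop :=
  IsTree T ∧ ∀ s ∈ T, ∃ t ∈ T, s <+: t ∧ (succs T t).Nontrivial

/-- Miller tree: every node has an extension with infinitely many immediate successors. -/
def IsMillerTree (T : Set (List ℕ)) : Prop :=
  IsTree T ∧ ∀ s ∈ T, ∃ t ∈ T, s <+: t ∧ (succs T t).Infinite

/-- Laver tree: has a stem (a node comparable with every node) such that every node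
extending the stem has infinitely many immediate successors. -/
def IsLaverTree (T : Set (List ℕ)) : Prop :=
  IsTree T ∧ ∃ s ∈ T, (∀ t ∈ T, s <+: t ∨ t <+: s) ∧
    ∀ t ∈ T, s <+: t → (succs T t).Infinite

/-- Complete Laver tree: every node has infinitely many immediate successors. -/
def IsCompleteLaverTree (T : Set (List ℕ)) : Prop :=
  IsTree T ∧ ∀ t ∈ T, (succs T t).Infinite

/-- The tree ideal t₀ associated with a family of trees 𝕋. -/
def treeIdeal (𝕋 : Set (Set (List ℕ))) : Set (Set (ℕ → ℕ)) :=
  {A | ∀ P ∈ 𝕋, ∃ Q ∈ 𝕋, Q ⊆ P ∧ treeBody Q ∩ A = ∅}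

/-- t-measurability with respect to a family of trees 𝕋. -/
def TMeasurable (𝕋 : Set (Set (List ℕ))) (A : Set (ℕ → ℕ)) : Prop :=
  ∀ P ∈ 𝕋, ∃ Q ∈ 𝕋, Q ⊆ P ∧ (treeBody Q ⊆ A ∨ treeBody Q ∩ A = ∅)

/-- 𝕋-Bernstein set: meets and omits the body of every tree in 𝕋. -/
def TBernstein (𝕋 : Set (Set (List ℕ))) (B : Set (ℕ → ℕ)) : Prop :=
  ∀ T ∈ 𝕋, (B ∩ treeBody T).Nonempty ∧ (B \ treeBody T).Nonempty

/-- restriction of x to n as a list -/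
def res (x : ℕ → ℕ) (n : ℕ) : List ℕ := List.ofFn fun i : Fin n => x i

@[simp] lemma res_length (x : ℕ → ℕ) (n : ℕ) : (res x n).length = n := by
  simp [res]

lemma res_getElem (x : ℕ → ℕ) (n i : ℕ) (h : i < (res x n).length) : (res x n)[i] = x i := by
  simp [res]

lemma res_prefix (x : ℕ → ℕ) {n m : ℕ} (h : n ≤ m) : res x n <+: res x m := by
  rw [List.prefix_iff_eq_take]
  refine List.ext_getElem (by simp [h]) fun i h1 h2 => ?_
  simp [res, List.getElem_take]

lemma prefix_res_iff {s : List ℕ} {x : ℕ → ℕ} {n : ℕ} (h : s.length ≤ n) :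
    s <+: res x n ↔ s = res x s.length := by
  constructor
  · intro hp
    refine List.ext_getElem (by simp) fun i h1 h2 => ?_
    rw [hp.getElem h1, res_getElem, res_getElem]
  · intro he
    rw [he]; exact res_prefix x h

lemma mem_treeBody {T : Set (List ℕ)} {x : ℕ → ℕ} : x ∈ treeBody T ↔ ∀ n, res x n ∈ T :=
  Iff.rfl

lemma IsTree.prefix_mem {T : Set (List ℕ)} (hT : IsTree T) {s t : List ℕ}
    (ht : t ∈ T) (hst : s <+: t) : s ∈ T := by
  rw [List.prefix_iff_eq_take] at hst
  rw [hst]; exact hT.2 t ht s.length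

lemma IsTree.nil_mem {T : Set (List ℕ)} (hT : IsTree T) : [] ∈ T := by
  obtain ⟨s, hs⟩ := hT.1
  simpa using hT.2 s hs 0

lemma treeBody_mono {S T : Set (List ℕ)} (h : S ⊆ T) : treeBody S ⊆ treeBody T :=
  fun _ hx n => h (hx n)

/-- every Miller tree has a branch -/
lemma IsMillerTree.body_nonempty {T : Set (List ℕ)} (hT : IsMillerTree T) :
    (treeBody T).Nonempty := by
  -- build a strictly increasing chain of nodes
  have step : ∀ s ∈ T, ∃ t ∈ T, s <+: t ∧ s.length < t.length := by
    intro s hs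
    obtain ⟨t, htT, hst, hinf⟩ := hT.2 s hs
    obtain ⟨n, hn⟩ := hinf.nonempty
    exact ⟨t ++ [n], hn, hst.trans ⟨[n], rfl⟩, by
      simpa using Nat.lt_succ_of_le hst.length_le⟩
  choose f hfT hfp hfl using step
  let g : ℕ → {s // s ∈ T} := fun n => Nat.rec ⟨[], hT.1.nil_mem⟩
    (fun _ p => ⟨f p.1 p.2, hfT p.1 p.2⟩) n
  have hchain : ∀ n, (g n).1 <+: (g (n+1)).1 := fun n => hfp _ _
  have hlen : ∀ n, n ≤ (g n).1.length := by
    intro n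
    induction n with
    | zero => simp
    | succ k ih => exact Nat.lt_of_le_of_lt ih (hfl _ _)
  have hchain' : ∀ {m n : ℕ}, m ≤ n → (g m).1 <+: (g n).1 := by
    intro m n h
    induction n with
    | zero => simp_all
    | succ k ih =>
      rcases Nat.lt_or_ge m (k+1) with h' | h'
      · exact (ih (Nat.lt_succ_iff.mp h')).trans (hchain k)
      · have : m = k + 1 := le_antisymm h h'
        simp [this]
  refine ⟨fun i => ((g (i+1)).1).getD i 0, fun n => ?_⟩
  have : res (fun i => ((g (i+1)).1).getD i 0) n = ((g n).1).take n := by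
    refine List.ext_getElem (by simp [Nat.le_trans (Nat.le_refl n) (hlen n), List.length_take]) ?_
    · intro i h1 h2
      rw [res_getElem]
      rw [List.getElem_take]
      have hi : i < ((g (i+1)).1).length := Nat.lt_of_lt_of_le (Nat.lt_succ_self i) (hlen (i+1))
      rw [List.getD_eq_getElem _ 0 hi]
      have hin : i < n := by
        have := h2
        simp [List.length_take] at this
        omega
      have hp : (g (i+1)).1 <+: (g n).1 := hchain' (Nat.succ_le_of_lt hin)
      exact hp.getElem hi
  have h2 := hT.1.2 _ (g n).2 n
  rw [← this] at h2
  exact h2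
/-- restriction of a tree to nodes comparable with s -/
def rst (T : Set (List ℕ)) (s : List ℕ) : Set (List ℕ) :=
  {t ∈ T | t <+: s ∨ s <+: t}

lemma rst_subset (T : Set (List ℕ)) (s : List ℕ) : rst T s ⊆ T := fun _ h => h.1

lemma self_mem_rst {T : Set (List ℕ)} {s : List ℕ} (hs : s ∈ T) : s ∈ rst T s :=
  ⟨hs, Or.inr (List.prefix_refl s)⟩

lemma mem_rst_long {T : Set (List ℕ)} {s t : List ℕ} (h : t ∈ rst T s)
    (hl : s.length ≤ t.length) : s <+: t := by
  rcases h.2 with h' | h'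
  · have : t = s := h'.eq_of_length (le_antisymm h'.length_le hl)
    rw [this]
  · exact h'

lemma IsMillerTree.rst_miller {T : Set (List ℕ)} (hT : IsMillerTree T) {s : List ℕ}
    (hs : s ∈ T) : IsMillerTree (rst T s) := by
  have key : ∀ w ∈ T, s <+: w → ∃ t' ∈ rst T s, w <+: t' ∧ (succs (rst T s) t').Infinite := by
    intro w hw hsw
    obtain ⟨t', ht', hwt', hinf⟩ := hT.2 w hw
    have hst' : s <+: t' := hsw.trans hwt'
    refine ⟨t', ⟨ht', Or.inr hst'⟩, hwt', ?_⟩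
    have he : succs (rst T s) t' = succs T t' :=
      Set.ext fun n => ⟨fun h => h.1, fun h => ⟨h, Or.inr (hst'.trans ⟨[n], rfl⟩)⟩⟩
    rw [he]; exact hinf
  constructor
  · constructor
    · exact ⟨s, self_mem_rst hs⟩
    · intro t ht n
      refine ⟨hT.1.2 t ht.1 n, ?_⟩
      rcases ht.2 with h' | h'
      · exact Or.inl ((List.take_prefix n t).trans h')
      · have h'' := List.prefix_iff_eq_take.mp h'
        rcases le_or_gt n s.length with hn | hn
        · left
          have : List.take n t <+: List.take s.length t := List.take_prefix_take_left hn
          rwa [← h''] at this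
        · right
          have : List.take s.length t <+: List.take n t :=
            List.take_prefix_take_left (le_of_lt hn)
          rwa [← h''] at this
  · intro t ht
    rcases ht.2 with h' | h'
    · obtain ⟨t', ht', hwt', hinf⟩ := key s hs (List.prefix_refl s)
      exact ⟨t', ht', h'.trans hwt', hinf⟩
    · obtain ⟨t', ht', hwt', hinf⟩ := key t ht.1 h'
      exact ⟨t', ht', hwt', hinf⟩
section Fusion

def FInv (P : Set (List ℕ)) (p : List ℕ × Set (List ℕ)) : Prop :=
  IsMillerTree p.2 ∧ p.2 ⊆ P ∧ p.1 ∈ p.2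

lemma exStep (A : Set (ℕ → ℕ)) (P : Set (List ℕ))
    (hd : ∀ R, IsMillerTree R → R ⊆ P → ∃ R', IsMillerTree R' ∧ R' ⊆ R ∧ treeBody R' ∩ A = ∅)
    (p : List ℕ × Set (List ℕ)) :
    ∃ z : List ℕ × (ℕ → ℕ) × Set (List ℕ), FInv P p →
      (p.1 <+: z.1 ∧ Function.Injective z.2.1 ∧ IsMillerTree z.2.2 ∧ z.2.2 ⊆ p.2 ∧
       treeBody z.2.2 ∩ A = ∅ ∧ ∀ k, z.1 ++ [z.2.1 k] ∈ z.2.2) := by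
  rcases Classical.em (FInv P p) with h | h
  · obtain ⟨hR, hRP, htR⟩ := h
    have hrst : IsMillerTree (rst p.2 p.1) := hR.rst_miller htR
    obtain ⟨R'', hM, hsub, hA⟩ := hd (rst p.2 p.1) hrst ((rst_subset _ _).trans hRP)
    obtain ⟨x, hx⟩ := hM.body_nonempty
    have hs0 : res x p.1.length ∈ R'' := hx p.1.length
    obtain ⟨u, huR, hs0u, hinf⟩ := hM.2 _ hs0
    have hp1u : p.1 <+: u := by
      refine mem_rst_long (hsub huR) ?_
      calc p.1.length = (res x p.1.length).length := by simp
      _ ≤ u.length := hs0u.length_le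
    obtain ⟨n, hninj, hnmem⟩ :
        ∃ f : ℕ → ℕ, Function.Injective f ∧ ∀ k, f k ∈ succs R'' u := by
      refine ⟨fun k => hinf.natEmbedding _ k, fun a b hab => ?_, fun k => (hinf.natEmbedding _ k).2⟩
      exact (hinf.natEmbedding _).injective (Subtype.ext hab)
    exact ⟨(u, n, R''), fun _ => ⟨hp1u, hninj, hM, hsub.trans (rst_subset _ _), hA, hnmem⟩⟩
  · exact ⟨([], id, ∅), fun h' => absurd h' h⟩

variable (A : ℕ → Set (ℕ → ℕ)) (P : Set (List ℕ))
  (hd : ∀ m R, IsMillerTree R → R ⊆ P →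
    ∃ R', IsMillerTree R' ∧ R' ⊆ R ∧ treeBody R' ∩ A m = ∅)

noncomputable def FF : List ℕ → List ℕ × Set (List ℕ)
  | [] => ([], P)
  | (c :: σ) =>
      let z := (exStep (A σ.length) P (hd σ.length) (FF σ)).choose
      (z.1 ++ [z.2.1 c], rst z.2.2 (z.1 ++ [z.2.1 c]))

noncomputable def zF (σ : List ℕ) : List ℕ × (ℕ → ℕ) × Set (List ℕ) :=
  (exStep (A σ.length) P (hd σ.length) (FF A P hd σ)).choose

lemma FF_cons (c : ℕ) (σ : List ℕ) :
    FF A P hd (c :: σ) = ((zF A P hd σ).1 ++ [(zF A P hd σ).2.1 c],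
      rst (zF A P hd σ).2.2 ((zF A P hd σ).1 ++ [(zF A P hd σ).2.1 c])) := rfl

lemma zF_spec (σ : List ℕ) (h : FInv P (FF A P hd σ)) :
    (FF A P hd σ).1 <+: (zF A P hd σ).1 ∧ Function.Injective (zF A P hd σ).2.1 ∧
      IsMillerTree (zF A P hd σ).2.2 ∧ (zF A P hd σ).2.2 ⊆ (FF A P hd σ).2 ∧
      treeBody (zF A P hd σ).2.2 ∩ A σ.length = ∅ ∧
      ∀ k, (zF A P hd σ).1 ++ [(zF A P hd σ).2.1 k] ∈ (zF A P hd σ).2.2 :=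
  (exStep (A σ.length) P (hd σ.length) (FF A P hd σ)).choose_spec h

lemma FF_inv (hP : IsMillerTree P) : ∀ σ, FInv P (FF A P hd σ) := by
  intro σ
  induction σ with
  | nil => exact ⟨hP, le_refl _, hP.1.nil_mem⟩
  | cons c σ ih =>
    obtain ⟨hpre, hinj, hM, hsub, hA, hmem⟩ := zF_spec A P hd σ ih
    rw [FF_cons]
    refine ⟨hM.rst_miller (hmem c), ?_, self_mem_rst (hmem c)⟩
    exact ((rst_subset _ _).trans hsub).trans ih.2.1
end Fusion
section Fusion2

variable (A : ℕ → Set (ℕ → ℕ)) (P : Set (List ℕ))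
  (hd : ∀ m R, IsMillerTree R → R ⊆ P →
    ∃ R', IsMillerTree R' ∧ R' ⊆ R ∧ treeBody R' ∩ A m = ∅)

/-- shorthand -/
noncomputable def tQ (σ : List ℕ) : List ℕ := (FF A P hd σ).1
noncomputable def RQ (σ : List ℕ) : Set (List ℕ) := (FF A P hd σ).2
noncomputable def uF (σ : List ℕ) : List ℕ := (zF A P hd σ).1
noncomputable def nF (σ : List ℕ) : ℕ → ℕ := (zF A P hd σ).2.1

lemma tQ_nil : tQ A P hd [] = [] := rfl
lemma tQ_cons (c : ℕ) (σ : List ℕ) :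
    tQ A P hd (c :: σ) = uF A P hd σ ++ [nF A P hd σ c] := rfl

lemma zspec (hP : IsMillerTree P) (σ : List ℕ) :
    tQ A P hd σ <+: uF A P hd σ ∧ Function.Injective (nF A P hd σ) ∧
      IsMillerTree (zF A P hd σ).2.2 ∧ (zF A P hd σ).2.2 ⊆ RQ A P hd σ ∧
      treeBody (zF A P hd σ).2.2 ∩ A σ.length = ∅ ∧
      ∀ k, uF A P hd σ ++ [nF A P hd σ k] ∈ (zF A P hd σ).2.2 :=
  zF_spec A P hd σ (FF_inv A P hd hP σ)

lemma RQ_miller (hP : IsMillerTree P) (σ : List ℕ) : IsMillerTree (RQ A P hd σ) :=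
  (FF_inv A P hd hP σ).1

lemma RQ_sub_P (hP : IsMillerTree P) (σ : List ℕ) : RQ A P hd σ ⊆ P :=
  (FF_inv A P hd hP σ).2.1

lemma tQ_mem_RQ (hP : IsMillerTree P) (σ : List ℕ) : tQ A P hd σ ∈ RQ A P hd σ :=
  (FF_inv A P hd hP σ).2.2

lemma tQ_prefix_cons (hP : IsMillerTree P) (c : ℕ) (σ : List ℕ) :
    tQ A P hd σ <+: tQ A P hd (c :: σ) := by
  rw [tQ_cons]
  exact ((zspec A P hd hP σ).1).trans ⟨[nF A P hd σ c], rfl⟩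

lemma tQ_len_cons (hP : IsMillerTree P) (c : ℕ) (σ : List ℕ) :
    (tQ A P hd σ).length < (tQ A P hd (c :: σ)).length := by
  rw [tQ_cons]
  have h := ((zspec A P hd hP σ).1).length_le
  simp only [List.length_append, List.length_cons, List.length_nil]
  omega

lemma RQ_cons_sub (hP : IsMillerTree P) (c : ℕ) (σ : List ℕ) :
    RQ A P hd (c :: σ) ⊆ RQ A P hd σ := by
  have h : RQ A P hd (c :: σ) = rst (zF A P hd σ).2.2 (tQ A P hd (c :: σ)) := rfl
  rw [h]
  exact (rst_subset _ _).trans (zspec A P hd hP σ).2.2.2.1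

lemma RQ_cons_body (hP : IsMillerTree P) (c : ℕ) (σ : List ℕ) :
    treeBody (RQ A P hd (c :: σ)) ∩ A σ.length = ∅ := by
  have h1 : RQ A P hd (c :: σ) ⊆ (zF A P hd σ).2.2 := rst_subset _ _
  have h2 := (zspec A P hd hP σ).2.2.2.2.1
  rw [Set.eq_empty_iff_forall_notMem] at h2 ⊢
  exact fun x hx => h2 x ⟨treeBody_mono h1 hx.1, hx.2⟩

lemma tQ_suffix (hP : IsMillerTree P) {σ τ : List ℕ} (h : σ <:+ τ) :
    tQ A P hd σ <+: tQ A P hd τ ∧ RQ A P hd τ ⊆ RQ A P hd σ := by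
  induction τ with
  | nil =>
    rw [List.suffix_nil] at h
    subst h
    exact ⟨List.prefix_refl _, le_refl _⟩
  | cons c τ' ih =>
    rcases List.suffix_cons_iff.mp h with h' | h'
    · subst h'
      exact ⟨List.prefix_refl _, le_refl _⟩
    · obtain ⟨h1, h2⟩ := ih h'
      exact ⟨h1.trans (tQ_prefix_cons A P hd hP c τ'), (RQ_cons_sub A P hd hP c τ').trans h2⟩

lemma tQ_len_lt (hP : IsMillerTree P) {σ τ : List ℕ} (h : σ <:+ τ) (hne : σ.length < τ.length) :
    (tQ A P hd σ).length < (tQ A P hd τ).length := by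
  induction τ with
  | nil => simp at hne
  | cons c τ' ih =>
    rcases List.suffix_cons_iff.mp h with h' | h'
    · subst h'; simp at hne
    · rcases Nat.lt_or_ge σ.length τ'.length with h'' | h''
      · exact (ih h' h'').trans (tQ_len_cons A P hd hP c τ')
      · have he : σ = τ' := h'.eq_of_length (le_antisymm h'.length_le h'')
        subst he
        exact tQ_len_cons A P hd hP c σ

lemma sibling_key (hP : IsMillerTree P) {σ : List ℕ} {a b : ℕ} {ρ : List ℕ}
    (h1 : tQ A P hd (a :: σ) <+: ρ) (h2 : tQ A P hd (b :: σ) <+: ρ) : a = b := by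
  rcases List.prefix_or_prefix_of_prefix h1 h2 with h | h <;>
  · rw [tQ_cons, tQ_cons] at h
    have he := h.eq_of_length (by simp)
    have he2 := List.append_inj_right he (rfl)
    simp at he2
    first
      | exact (zspec A P hd hP σ).2.1 he2
      | exact ((zspec A P hd hP σ).2.1 he2).symm

lemma exists_cons_suffix {σ τ : List ℕ} (h : σ <:+ τ) (hne : σ ≠ τ) :
    ∃ c, (c :: σ) <:+ τ := by
  induction τ with
  | nil => rw [List.suffix_nil] at h; exact absurd h hne
  | cons d τ' ih =>
    rcases List.suffix_cons_iff.mp h with h' | h'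
    · exact absurd h' hne
    · by_cases h'' : σ = τ'
      · subst h''; exact ⟨d, List.suffix_refl _⟩
      · obtain ⟨c, hc⟩ := ih h' h''
        exact ⟨c, hc.trans (List.suffix_cons d τ')⟩

lemma tQ_comp_aux (hP : IsMillerTree P) : ∀ N σ τ, σ.length + τ.length ≤ N →
    tQ A P hd σ <+: tQ A P hd τ → σ <:+ τ ∨ τ <:+ σ := by
  intro N
  induction N with
  | zero =>
    intro σ τ hlen _
    have h0 : σ = [] := List.length_eq_zero_iff.mp (by omega)
    subst h0; exact Or.inl List.nil_suffix
  | succ N ih =>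
    intro σ τ hlen hpre
    match σ, τ with
    | [], τ => exact Or.inl List.nil_suffix
    | σ, [] => exact Or.inr List.nil_suffix
    | a :: σ', b :: τ' =>
      have hσ'τ : tQ A P hd σ' <+: tQ A P hd (b :: τ') :=
        (tQ_prefix_cons A P hd hP a σ').trans hpre
      have hτ'τ : tQ A P hd τ' <+: tQ A P hd (b :: τ') := tQ_prefix_cons A P hd hP b τ'
      have hor : σ' <:+ τ' ∨ τ' <:+ σ' := by
        rcases List.prefix_or_prefix_of_prefix hσ'τ hτ'τ with h | h
        · exact ih σ' τ' (by simp at hlen ⊢; omega) h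
        · exact (ih τ' σ' (by simp at hlen ⊢; omega) h).symm
      by_cases heq : σ' = τ'
      · subst heq
        have hab : a = b := sibling_key A P hd hP hpre (List.prefix_refl _)
        subst hab
        exact Or.inl (List.suffix_refl _)
      · rcases hor with h | h
        · obtain ⟨c, hc⟩ := exists_cons_suffix h heq
          have h1 : tQ A P hd (c :: σ') <+: tQ A P hd (b :: τ') :=
            ((tQ_suffix A P hd hP hc).1).trans (tQ_prefix_cons A P hd hP b τ')
          have hac : a = c := sibling_key A P hd hP hpre h1
          subst hac
          exact Or.inl (hc.trans (List.suffix_cons b τ'))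
        · obtain ⟨c, hc⟩ := exists_cons_suffix h (Ne.symm heq)
          have h1 : tQ A P hd (c :: τ') <+: tQ A P hd (b :: τ') :=
            ((tQ_suffix A P hd hP hc).1).trans hσ'τ
          have hbc : b = c := sibling_key A P hd hP (List.prefix_refl _) h1
          subst hbc
          exact Or.inr (hc.trans (List.suffix_cons a σ'))

lemma tQ_comp (hP : IsMillerTree P) {σ τ : List ℕ}
    (hpre : tQ A P hd σ <+: tQ A P hd τ) : σ <:+ τ := by
  rcases tQ_comp_aux A P hd hP (σ.length + τ.length) σ τ (le_refl _) hpre with h | h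
  · exact h
  · rcases Nat.lt_or_ge τ.length σ.length with h' | h'
    · exact absurd hpre.length_le (by have := tQ_len_lt A P hd hP h h'; omega)
    · have : τ = σ := h.eq_of_length (le_antisymm h.length_le h')
      rw [this]
  end Fusion2
section Fusion3

variable (A : ℕ → Set (ℕ → ℕ)) (P : Set (List ℕ))
  (hd : ∀ m R, IsMillerTree R → R ⊆ P →
    ∃ R', IsMillerTree R' ∧ R' ⊆ R ∧ treeBody R' ∩ A m = ∅)

def QT : Set (List ℕ) := {s | ∃ σ, s <+: tQ A P hd σ}

@[simp] lemma res_zero (x : ℕ → ℕ) : res x 0 = [] := by simp [res]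

lemma QT_tree : IsTree (QT A P hd) := by
  constructor
  · exact ⟨tQ A P hd [], [], List.prefix_refl _⟩
  · rintro s ⟨σ, hs⟩ n
    exact ⟨σ, (List.take_prefix n s).trans hs⟩

lemma uF_mem_QT (σ : List ℕ) : uF A P hd σ ∈ QT A P hd :=
  ⟨0 :: σ, ⟨[nF A P hd σ 0], rfl⟩⟩

lemma tQ_mem_QT (σ : List ℕ) : tQ A P hd σ ∈ QT A P hd := ⟨σ, List.prefix_refl _⟩

lemma QT_sub_P (hP : IsMillerTree P) : QT A P hd ⊆ P := by
  rintro s ⟨σ, hs⟩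
  exact hP.1.prefix_mem (RQ_sub_P A P hd hP σ (tQ_mem_RQ A P hd hP σ)) hs

lemma QT_miller (hP : IsMillerTree P) : IsMillerTree (QT A P hd) := by
  refine ⟨QT_tree A P hd, ?_⟩
  rintro s ⟨σ, hs⟩
  refine ⟨uF A P hd σ, uF_mem_QT A P hd σ, hs.trans (zspec A P hd hP σ).1, ?_⟩
  refine Set.infinite_of_injective_forall_mem (f := nF A P hd σ) (zspec A P hd hP σ).2.1 ?_
  intro k
  show uF A P hd σ ++ [nF A P hd σ k] ∈ QT A P hd
  rw [← tQ_cons]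
  exact tQ_mem_QT A P hd (k :: σ)

lemma QT_chain (hP : IsMillerTree P) {x : ℕ → ℕ} (hx : x ∈ treeBody (QT A P hd)) :
    ∀ m, ∃ σ : List ℕ, σ.length = m ∧ tQ A P hd σ = res x (tQ A P hd σ).length := by
  intro m
  induction m with
  | zero => exact ⟨[], rfl, by rw [tQ_nil]; simp⟩
  | succ m ih =>
    obtain ⟨σ, hlen, hσ⟩ := ih
    set N := (uF A P hd σ).length + 2 with hN
    have hlenσ : (tQ A P hd σ).length ≤ (uF A P hd σ).length := (zspec A P hd hP σ).1.length_le
    obtain ⟨τ, hτ⟩ : res x N ∈ QT A P hd := hx N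
    have htσN : tQ A P hd σ <+: res x N := by
      rw [hσ]
      exact res_prefix x (by omega)
    have hστ : σ <:+ τ := tQ_comp A P hd hP (htσN.trans hτ)
    have hne : σ ≠ τ := by
      rintro rfl
      have := hτ.length_le
      simp [hN] at this
      omega
    obtain ⟨c, hc⟩ := exists_cons_suffix hστ hne
    have h1 : tQ A P hd (c :: σ) <+: tQ A P hd τ := (tQ_suffix A P hd hP hc).1
    have hlc : (tQ A P hd (c :: σ)).length = (uF A P hd σ).length + 1 := by
      rw [tQ_cons]; simp
    rcases List.prefix_or_prefix_of_prefix h1 hτ with h | h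
    · refine ⟨c :: σ, by simp [hlen], ?_⟩
      have : tQ A P hd (c :: σ) <+: res x N := h
      rw [prefix_res_iff (by omega)] at this
      exact this
    · exact absurd h.length_le (by rw [res_length, hlc]; omega)

lemma QT_x_in_RQ (hP : IsMillerTree P) {x : ℕ → ℕ} (hx : x ∈ treeBody (QT A P hd))
    {σ : List ℕ} (hσ : tQ A P hd σ = res x (tQ A P hd σ).length) :
    x ∈ treeBody (RQ A P hd σ) := by
  intro n
  rcases le_or_gt n (tQ A P hd σ).length with h | h
  · refine (RQ_miller A P hd hP σ).1.prefix_mem (tQ_mem_RQ A P hd hP σ) ?_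
    rw [hσ]
    exact res_prefix x h
  · obtain ⟨τ, hτ⟩ : res x n ∈ QT A P hd := hx n
    have htσ : tQ A P hd σ <+: res x n := by
      rw [hσ]; exact res_prefix x (le_of_lt h)
    have hστ : σ <:+ τ := tQ_comp A P hd hP (htσ.trans hτ)
    have hmem : tQ A P hd τ ∈ RQ A P hd σ :=
      (tQ_suffix A P hd hP hστ).2 (tQ_mem_RQ A P hd hP τ)
    exact (RQ_miller A P hd hP σ).1.prefix_mem hmem hτ

include hd in
lemma fusionMain (hP : IsMillerTree P) :
    ∃ Q, IsMillerTree Q ∧ Q ⊆ P ∧ treeBody Q ∩ (⋃ m, A m) = ∅ := by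
  refine ⟨QT A P hd, QT_miller A P hd hP, QT_sub_P A P hd hP, ?_⟩
  rw [Set.eq_empty_iff_forall_notMem]
  rintro x ⟨hxQ, hxU⟩
  obtain ⟨_, ⟨m, rfl⟩, hxm⟩ := hxU
  obtain ⟨σ, hlen, hσ⟩ := QT_chain A P hd hP hxQ (m + 1)
  match σ, hlen with
  | c :: σ', hlen =>
    have hx' : x ∈ treeBody (RQ A P hd (c :: σ')) := QT_x_in_RQ A P hd hP hxQ hσ
    have hbody := RQ_cons_body A P hd hP c σ'
    rw [Set.eq_empty_iff_forall_notMem] at hbody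
    have hm : σ'.length = m := by simpa using hlen
    exact hbody x ⟨hx', hm ▸ hxm⟩

end Fusion3
/-! measurability layer -/

def MFam : Set (Set (List ℕ)) := {T | IsMillerTree T}

lemma tmeas_empty : TMeasurable MFam ∅ := by
  intro P hP
  exact ⟨P, hP, le_refl _, Or.inr (Set.inter_empty _)⟩

lemma tmeas_compl {A : Set (ℕ → ℕ)} (h : TMeasurable MFam A) : TMeasurable MFam Aᶜ := by
  intro P hP
  obtain ⟨Q, hQ, hQP, hor⟩ := h P hP
  refine ⟨Q, hQ, hQP, ?_⟩
  rcases hor with h' | h'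
  · exact Or.inr (by rw [Set.eq_empty_iff_forall_notMem]; exact fun x hx => hx.2 (h' hx.1))
  · refine Or.inl fun x hx hxA => ?_
    rw [Set.eq_empty_iff_forall_notMem] at h'
    exact h' x ⟨hx, hxA⟩

lemma tmeas_iUnion {A : ℕ → Set (ℕ → ℕ)} (h : ∀ n, TMeasurable MFam (A n)) :
    TMeasurable MFam (⋃ n, A n) := by
  intro P hP
  by_cases hcase : ∃ Q, IsMillerTree Q ∧ Q ⊆ P ∧ ∃ m, treeBody Q ⊆ A m
  · obtain ⟨Q, hQ, hQP, m, hm⟩ := hcase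
    exact ⟨Q, hQ, hQP, Or.inl (hm.trans (Set.subset_iUnion A m))⟩
  · have hd : ∀ m R, IsMillerTree R → R ⊆ P →
        ∃ R', IsMillerTree R' ∧ R' ⊆ R ∧ treeBody R' ∩ A m = ∅ := by
      intro m R hR hRP
      obtain ⟨R', hR', hR'R, hor⟩ := h m R hR
      rcases hor with h' | h'
      · exact absurd ⟨R', hR', hR'R.trans hRP, m, h'⟩ hcase
      · exact ⟨R', hR', hR'R, h'⟩
    obtain ⟨Q, hQ, hQP, hbody⟩ := fusionMain A P hd hP
    exact ⟨Q, hQ, hQP, Or.inr hbody⟩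

/-- the basic clopen set determined by a finite sequence -/
def cylSet (s : List ℕ) : Set (ℕ → ℕ) := {x | res x s.length = s}

lemma tmeas_cylSet (s : List ℕ) : TMeasurable MFam (cylSet s) := by
  intro P hP
  by_cases hs : s ∈ P
  · refine ⟨rst P s, hP.rst_miller hs, rst_subset _ _, Or.inl ?_⟩
    intro x hx
    have h1 : res x s.length ∈ rst P s := hx s.length
    have h2 : s <+: res x s.length := mem_rst_long h1 (by simp)
    exact (h2.eq_of_length (by simp)).symm
  · refine ⟨P, hP, le_refl _, Or.inr ?_⟩
    rw [Set.eq_empty_iff_forall_notMem]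
    rintro x ⟨hx, hcyl⟩
    exact hs (hcyl ▸ hx s.length)

lemma cylinder_eq_cylSet (x : ℕ → ℕ) (n : ℕ) : PiNat.cylinder x n = cylSet (res x n) := by
  ext y
  show (∀ i, i < n → y i = x i) ↔ res y (res x n).length = res x n
  rw [res_length]
  constructor
  · intro h
    refine List.ext_getElem (by simp) fun i h1 h2 => ?_
    rw [res_getElem, res_getElem]
    exact h i (by simpa using h1)
  · intro h i hi
    have := congrArg (fun l => l.getD i 0) h
    simpa [res, hi, List.getD_eq_getElem, List.getElem_ofFn] using this

lemma borel_tmeas {B : Set (ℕ → ℕ)} (hB : MeasurableSet[borel (ℕ → ℕ)] B) :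
    TMeasurable MFam B := by
  let M : MeasurableSpace (ℕ → ℕ) :=
    { MeasurableSet' := TMeasurable MFam
      measurableSet_empty := tmeas_empty
      measurableSet_compl := fun _ h => tmeas_compl h
      measurableSet_iUnion := fun _ h => tmeas_iUnion h }
  have hle : borel (ℕ → ℕ) ≤ M := by
    refine MeasurableSpace.generateFrom_le fun U hU => ?_
    obtain ⟨S, hSsub, hUeq⟩ :=
      (PiNat.isTopologicalBasis_cylinders (fun _ : ℕ => ℕ)).open_eq_sUnion hU
    have hsub2 : {s : Set (ℕ → ℕ) | ∃ x n, s = PiNat.cylinder x n} ⊆ Set.range cylSet := by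
      rintro s ⟨x, n, rfl⟩
      exact ⟨res x n, (cylinder_eq_cylSet x n).symm⟩
    have hScount : S.Countable := (Set.countable_range cylSet).mono (hSsub.trans hsub2)
    rw [hUeq]
    refine MeasurableSet.sUnion hScount fun u hu => ?_
    obtain ⟨x, n, rfl⟩ := hSsub hu
    show TMeasurable MFam _
    rw [cylinder_eq_cylSet]
    exact tmeas_cylSet _
  exact hle B hB

/-- a Borel set belongs to m₀ iff it contains the body of no Miller tree. -/
theorem stmt7 (B : Set (ℕ → ℕ)) (hB : MeasurableSet[borel (ℕ → ℕ)] B) :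
    B ∈ treeIdeal {T | IsMillerTree T} ↔ ¬ ∃ T, IsMillerTree T ∧ treeBody T ⊆ B := by
  constructor
  · rintro hIdeal ⟨T, hT, hTB⟩
    obtain ⟨Q, hQ, hQT, hdisj⟩ := hIdeal T hT
    obtain ⟨x, hx⟩ := IsMillerTree.body_nonempty hQ
    rw [Set.eq_empty_iff_forall_notMem] at hdisj
    exact hdisj x ⟨hx, hTB (treeBody_mono hQT hx)⟩
  · intro hno P hP
    obtain ⟨Q, hQ, hQP, hor⟩ := borel_tmeas hB P hP
    rcases hor with h | h
    · exact absurd ⟨Q, hQ, h⟩ hno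
    · exact ⟨Q, hQ, hQP, h⟩
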